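/- The inequation a⁺ ∩ 1 ≤ (a·a)⁺ is valid in all algebras of binary relations: for every set S and every binary relation A on S, the intersection of the transitive closure A⁺ with the identity relation is contained in the transitive closure of A ∘ A. -/

import Mathlib

open Relation

lemma tail_parity {S : Type} (A : S → S → Prop) {x y : S}
    (h : Relation.TransGen A x y) :
    Relation.TransGen (Relation.Comp A A) x y ∨
      ∃ z, Relation.ReflTransGen (Relation.Comp A A) x z ∧ A z y := by
  induction h with
  | single h => exact Or.inr ⟨x, ReflTransGen.refl, h⟩
  | tail _ hbc ih =>
    rcases ih with heven | ⟨z, hxz, hzb⟩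
    · exact Or.inr ⟨_, heven.to_reflTransGen, hbc⟩
    · exact Or.inl (TransGen.tail' hxz ⟨_, hzb, hbc⟩)

lemma head_parity {S : Type} (A : S → S → Prop) {x y : S}
    (h : Relation.TransGen A x y) :
    Relation.TransGen (Relation.Comp A A) x y ∨
      ∃ w, A x w ∧ Relation.ReflTransGen (Relation.Comp A A) w y := by
  induction h using Relation.TransGen.head_induction_on with
  | single h => exact Or.inr ⟨y, h, ReflTransGen.refl⟩
  | head hab _ ih =>
    rcases ih with heven | ⟨w, hbw, hwy⟩
    · exact Or.inr ⟨_, hab, heven.to_reflTransGen⟩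
    · exact Or.inl (TransGen.head' ⟨_, hab, hbw⟩ hwy)

/-- `a⁺ ∩ 1 ≤ (a·a)⁺` is valid in all algebras of binary relations. -/
theorem stmt10 {S : Type} (A : S → S → Prop) (x y : S) :
    Relation.TransGen A x y → x = y → Relation.TransGen (Relation.Comp A A) x y := by
  intro h hxy
  subst hxy
  rcases tail_parity A h with heven | ⟨z, hxz, hzx⟩
  · exact heven
  rcases head_parity A h with heven | ⟨w, hxw, hwx⟩
  · exact heven
  exact TransGen.trans_left (TransGen.tail' hxz ⟨x, hzx, hxw⟩) hwx
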